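/- (Matrix-Tree Theorem.) Let n ≥ 1, let R be a commutative ring, and let x : {1,…,n} × {1,…,n} → R be arbitrary weights, viewed as the weighted complete digraph G on vertex set {1,…,n} with one edge i → j of weight x_{ij} for each ordered pair (i,j). Let L be the n × n Laplacian matrix L = D − A, where D is diagonal with D[i,i] = Σ_{j=1}^{n} x_{ij} and A[i,j] = x_{ij}. Then for every vertex i, det(L_i^i) = A_i(G), where L_i^i is L with row i and column i removed, and A_i(G) = Σ_f Π_{w ≠ i} x_{w, f(w)}, the sum running over all functions f : {1,…,n}∖{i} → {1,…,n} such that for every vertex w, iterating f (with the convention f(i) = i) starting from w eventually reaches i. -/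

import Mathlib

open Classical

/-- Matrix-Tree Theorem for the weighted complete digraph on `n + 1 ≥ 1` vertices
(encoded as `Fin (n+1)`), with one edge `a → b` of weight `x a b` for each ordered pair.
Let `L = D - A` be the Laplacian, `D` diagonal with `D[a,a] = Σ_c x a c` and
`A[a,b] = x a b`.  Then for every vertex `i`, the determinant of `L` with row `i` and
column `i` removed equals `A_i(G)`, the weighted sum over all arborescences rooted at
`i`: functions `f` on the vertices `w ≠ i` whose functional digraph (edges `w → f w`,
with the convention `f i = i`) has every vertex eventually reaching `i` under
iteration, with weight `Π_{w ≠ i} x w (f w)`. -/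
private lemma det_aux {R : Type} [CommRing R] {n : ℕ} {i : Fin (n + 1)}
    (r : {w : Fin (n + 1) // w ≠ i} → Fin (n + 1)) :
    (Matrix.of fun a b : {w : Fin (n + 1) // w ≠ i} =>
        (if a = b then (1 : R) else 0) - (if r a = b.1 then 1 else 0)).det
    = if (∀ w : Fin (n + 1), ∃ m : ℕ,
          (fun u => if h : u = i then i else r ⟨u, h⟩)^[m] w = i) then 1 else 0 := by
  classical
  let W := {w : Fin (n + 1) // w ≠ i}
  set F : Fin (n + 1) → Fin (n + 1) := fun u => if h : u = i then i else r ⟨u, h⟩ with hF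
  set M : Matrix W W R := Matrix.of fun a b : W =>
      (if a = b then (1 : R) else 0) - (if r a = b.1 then 1 else 0) with hM
  have hMab : ∀ a b : W, M a b = (if a = b then (1 : R) else 0) - (if r a = b.1 then 1 else 0) :=
    fun a b => rfl
  have hFa : ∀ a : W, F a.1 = r a := by
    intro a
    simp only [hF, dif_neg a.2]
    rfl
  by_cases hcond : ∀ w, ∃ m, F^[m] w = i
  · rw [if_pos hcond]
    set d : W → ℕ := fun a => Nat.find (hcond a.1) with hd
    have hspec : ∀ a : W, F^[d a] a.1 = i := fun a => Nat.find_spec (hcond a.1)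
    have hmin : ∀ (a : W) (m : ℕ), F^[m] a.1 = i → d a ≤ m := fun a m h => Nat.find_min' _ h
    have hpos : ∀ a : W, 0 < d a := by
      intro a
      rcases Nat.eq_zero_or_pos (d a) with h | h
      · exfalso; have := hspec a; rw [h] at this; exact a.2 this
      · exact h
    have hkey : ∀ a b : W, r a = b.1 → d b < d a := by
      intro a b h
      have hpa := hpos a
      have h1 : F a.1 = b.1 := by rw [hFa a, h]
      have h2 : F^[d a - 1] b.1 = i := by
        have h3 := hspec a
        rw [show d a = (d a - 1) + 1 by omega, Function.iterate_succ_apply, h1] at h3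
        exact h3
      have := hmin b _ h2
      omega
    have hBT : M.BlockTriangular (fun a => OrderDual.toDual (d a)) := by
      intro a b hlt
      have hab : d a < d b := hlt
      rw [hMab]
      rw [if_neg, if_neg, sub_zero]
      · intro h; exact absurd hab (not_lt.2 (le_of_lt (hkey a b h)))
      · rintro rfl; exact lt_irrefl _ hab
    rw [hBT.det]
    refine Finset.prod_eq_one fun k _ => ?_
    have hblock : M.toSquareBlock (fun a => OrderDual.toDual (d a)) k = 1 := by
      ext a b
      rcases eq_or_ne a b with rfl | hne
      · have : r a.1 ≠ (a.1 : W).1 := by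
          intro h
          exact absurd (hkey a.1 a.1 h) (lt_irrefl _)
        simp [Matrix.toSquareBlock_def, hMab, this, Matrix.one_apply]
      · have h1 : (a.1 : W) ≠ b.1 := fun h => hne (Subtype.ext h)
        have h2 : r a.1 ≠ (b.1 : W).1 := by
          intro h
          have := hkey a.1 b.1 h
          have hk : d a.1 = d b.1 := by
            have := a.2.trans b.2.symm
            exact OrderDual.toDual.injective this
          omega
        simp [Matrix.toSquareBlock_def, hMab, h1, h2, Matrix.one_apply, hne]
    rw [hblock, Matrix.det_one]
  · rw [if_neg hcond]
    push_neg at hcond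
    obtain ⟨w, hw⟩ := hcond
    obtain ⟨k, l, hkl, hlt, heq⟩ : ∃ k l : ℕ, k < l ∧ True ∧ F^[k] w = F^[l] w := by
      obtain ⟨a, b, hne, he⟩ := Finite.exists_ne_map_eq_of_infinite (fun m : ℕ => F^[m] w)
      rcases Ne.lt_or_gt hne with h | h
      · exact ⟨a, b, h, trivial, he⟩
      · exact ⟨b, a, h, trivial, he.symm⟩
    set p := l - k with hp'
    have hp : 0 < p := by omega
    set c0 : Fin (n + 1) := F^[k] w with hc0
    have hcyc : F^[p] c0 = c0 := by
      rw [hc0, ← Function.iterate_add_apply, show p + k = l by omega, ← heq]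
    have hci : ∀ j, F^[j] c0 ≠ i := by
      intro j
      rw [hc0, ← Function.iterate_add_apply]
      exact hw _
    set g : ℕ → W := fun j => ⟨F^[j] c0, hci j⟩ with hg
    have hgmod : ∀ j, g j = g (j % p) := by
      intro j
      apply Subtype.ext
      show F^[j] c0 = F^[j % p] c0
      conv_lhs => rw [← Nat.mod_add_div j p]
      rw [Function.iterate_add_apply]
      congr 1
      rw [Function.iterate_mul]
      exact Function.iterate_fixed hcyc _
    set C : Finset W := (Finset.range p).image g with hC
    have hgC : ∀ j, g j ∈ C := by
      intro j
      rw [hgmod j]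
      exact Finset.mem_image_of_mem g (Finset.mem_range.2 (Nat.mod_lt _ hp))
    have hFp : ∀ a ∈ C, F^[p] a.1 = a.1 := by
      intro a ha
      obtain ⟨j, _, rfl⟩ := Finset.mem_image.1 ha
      show F^[p] (F^[j] c0) = F^[j] c0
      rw [← Function.iterate_add_apply, show p + j = j + p by omega,
        Function.iterate_add_apply, hcyc]
    have hFne : ∀ a ∈ C, F a.1 ≠ i := by
      intro a ha
      obtain ⟨j, _, rfl⟩ := Finset.mem_image.1 ha
      show F (F^[j] c0) ≠ i
      have he : F (F^[j] c0) = F^[j + 1] c0 := (Function.iterate_succ_apply' F j c0).symm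
      rw [he]
      exact hci _
    set σ : W → W := fun a => if h : F a.1 = i then a else ⟨F a.1, h⟩ with hσ
    have hσval : ∀ a ∈ C, (σ a).1 = F a.1 := by
      intro a ha
      simp only [hσ, dif_neg (hFne a ha)]
    have hσmem : ∀ a ∈ C, σ a ∈ C := by
      intro a ha
      obtain ⟨j, _, rfl⟩ := Finset.mem_image.1 ha
      have : σ (g j) = g (j + 1) := by
        apply Subtype.ext
        rw [hσval (g j) ha]
        show F (F^[j] c0) = F^[j+1] c0
        rw [Function.iterate_succ_apply']
      rw [this]
      exact hgC _
    have hinj : ∀ a ∈ C, ∀ b ∈ C, σ a = σ b → a = b := by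
      intro a ha b hb h
      have h1 : F a.1 = F b.1 := by
        rw [← hσval a ha, ← hσval b hb, h]
      apply Subtype.ext
      have h2 : ∀ c ∈ C, F^[p - 1] (F c.1) = c.1 := by
        intro c hc
        rw [← Function.iterate_succ_apply, show (p - 1).succ = p by omega]
        exact hFp c hc
      rw [← h2 a ha, ← h2 b hb, h1]
    have himg : C.image σ = C := by
      apply Finset.eq_of_subset_of_card_le
      · intro y hy
        obtain ⟨a, ha, rfl⟩ := Finset.mem_image.1 hy
        exact hσmem a ha
      · rw [Finset.card_image_of_injOn hinj]
    have hrowsum : ∀ b : W, ∑ a ∈ C, M a b = 0 := by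
      intro b
      have h1 : ∀ a ∈ C, M a b =
          (if a = b then (1 : R) else 0) - (if σ a = b then 1 else 0) := by
        intro a ha
        rw [hMab]
        congr 1
        have : r a = b.1 ↔ σ a = b := by
          rw [← hFa a, ← hσval a ha]
          exact ⟨fun h => Subtype.ext h, fun h => congrArg Subtype.val h⟩
        rcases eq_or_ne (σ a) b with h | h
        · rw [if_pos (this.2 h), if_pos h]
        · rw [if_neg (fun hh => h (this.1 hh)), if_neg h]
      rw [Finset.sum_congr rfl h1, Finset.sum_sub_distrib]
      have h2 : ∑ y ∈ C.image σ, (if y = b then (1 : R) else 0)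
          = ∑ a ∈ C, (if σ a = b then (1 : R) else 0) := Finset.sum_image hinj
      rw [← h2, himg]
      simp
    have hzero : (1 : R) • M (g 0) + ∑ a ∈ C.erase (g 0), (1 : R) • M a = 0 := by
      funext b
      simp only [one_smul, Pi.add_apply, Finset.sum_apply, Pi.zero_apply]
      have := Finset.add_sum_erase C (fun a => M a b) (hgC 0)
      have h' : (∑ x ∈ C.erase (g 0), M x) b = ∑ x ∈ C.erase (g 0), M x b :=
        Finset.sum_apply b _ _
      rw [h', this, hrowsum b]
    have haux := Matrix.det_updateRow_sum_aux M (j := g 0) (C.erase (g 0))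
      (Finset.notMem_erase _ _) (fun _ => (1 : R)) 1
    simp only [one_smul] at haux hzero
    rw [hzero] at haux
    rw [← haux]
    · exact Matrix.det_eq_zero_of_row_eq_zero (g 0) (fun j => by simp)

theorem matrix_tree_theorem
    {R : Type} [CommRing R] (n : ℕ) (x : Fin (n + 1) → Fin (n + 1) → R) (i : Fin (n + 1)) :
    Matrix.det
      ((Matrix.of fun a b : Fin (n + 1) =>
          (if a = b then ∑ c, x a c else 0) - x a b).submatrix i.succAbove i.succAbove)
    = ∑ f : {w : Fin (n + 1) // w ≠ i} → Fin (n + 1),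
        if (∀ w : Fin (n + 1), ∃ m : ℕ,
              (fun u => if h : u = i then i else f ⟨u, h⟩)^[m] w = i)
        then ∏ w : {w : Fin (n + 1) // w ≠ i}, x w (f w) else 0 := by
  classical
  let e : Fin n ≃ {w : Fin (n + 1) // w ≠ i} := finSuccAboveEquiv i
  let N : Matrix {w : Fin (n + 1) // w ≠ i} {w : Fin (n + 1) // w ≠ i} R :=
    Matrix.of (fun a b => (if a = b then ∑ c, x a.1 c else 0) - x a.1 b.1)
  let v : {w : Fin (n + 1) // w ≠ i} → Fin (n + 1) → ({w : Fin (n + 1) // w ≠ i} → R) :=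
    fun a c b => (if a = b then (1 : R) else 0) - (if c = b.1 then 1 else 0)
  have h1 : (Matrix.of fun a b : Fin (n + 1) =>
      (if a = b then ∑ c, x a c else 0) - x a b).submatrix i.succAbove i.succAbove
      = N.submatrix e e := by
    ext j k
    have hts : (e j).1 = i.succAbove j := rfl
    have hts' : (e k).1 = i.succAbove k := rfl
    show (if i.succAbove j = i.succAbove k then ∑ c, x (i.succAbove j) c else 0)
        - x (i.succAbove j) (i.succAbove k)
      = (if e j = e k then ∑ c, x (e j).1 c else 0) - x (e j).1 (e k).1
    rw [hts, hts']
    congr 1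
    refine if_congr ?_ rfl rfl
    rw [← hts, ← hts']
    exact Subtype.ext_iff.symm
  rw [h1, Matrix.det_submatrix_equiv_self]
  have hrow : (N : ({w : Fin (n + 1) // w ≠ i}) → ({w : Fin (n + 1) // w ≠ i}) → R)
      = fun a => ∑ c, x a.1 c • v a c := by
    funext a b
    rw [Finset.sum_apply]
    show (if a = b then ∑ c, x a.1 c else 0) - x a.1 b.1
      = ∑ c, x a.1 c • ((if a = b then (1 : R) else 0) - (if c = b.1 then 1 else 0))
    have hc : ∀ c, x a.1 c • ((if a = b then (1 : R) else 0) - (if c = b.1 then 1 else 0))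
        = (if a = b then x a.1 c else 0) - (if c = b.1 then x a.1 c else 0) := by
      intro c
      by_cases hab : a = b <;> by_cases hcb : c = b.1 <;>
        simp [hab, hcb]
    rw [Finset.sum_congr rfl fun c _ => hc c, Finset.sum_sub_distrib]
    congr 1
    · rcases eq_or_ne a b with rfl | h
      · simp
      · simp [h]
    · rw [Finset.sum_ite_eq' Finset.univ b.1 (fun c => x a.1 c)]
      simp
  have h2 : N.det = ∑ r : ({w : Fin (n + 1) // w ≠ i} → Fin (n + 1)),
      Matrix.detRowAlternating (R := R) (fun a => x a.1 (r a) • v a (r a)) := by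
    show Matrix.detRowAlternating N = _
    rw [hrow]
    exact Matrix.detRowAlternating.toMultilinearMap.map_sum (fun a c => x a.1 c • v a c)
  rw [h2]
  refine Finset.sum_congr rfl fun r _ => ?_
  have h3 : Matrix.detRowAlternating (R := R) (fun a => x a.1 (r a) • v a (r a))
      = (∏ a : {w : Fin (n + 1) // w ≠ i}, x a.1 (r a)) •
        Matrix.detRowAlternating (R := R) (fun a => v a (r a)) :=
    Matrix.detRowAlternating.toMultilinearMap.map_smul_univ _ _
  rw [h3]
  have h4 : Matrix.detRowAlternating (R := R) (fun a => v a (r a))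
      = (Matrix.of fun a b : {w : Fin (n + 1) // w ≠ i} =>
          (if a = b then (1 : R) else 0) - (if r a = b.1 then 1 else 0)).det := rfl
  rw [h4, det_aux r]
  by_cases h : (∀ w : Fin (n + 1), ∃ m : ℕ,
      (fun u => if h : u = i then i else r ⟨u, h⟩)^[m] w = i)
  · rw [if_pos h, if_pos h, smul_eq_mul, mul_one]
  · rw [if_neg h, if_neg h, smul_zero]
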